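/- arXiv:1209.5932 — 3 statements merged into one kernel-verified Lean document; each statement's English description precedes it below -/
import Mathlib

section
/- For 0 ≤ i ≤ n and 0 ≤ k ≤ n, the Krawtchouk polynomials satisfy the reflection symmetry K_i(k, n) = (-1)^k · K_{n-i}(k, n). -/
open Finset

def K (i k n : ℕ) : ℤ :=
  ∑ j ∈ Finset.range (i + 1), (-1) ^ j * (Nat.choose k j) * (Nat.choose (n - k) (i - j))

lemma K_filter (i k n : ℕ) (hi : i ≤ n) (hk : k ≤ n) :
    K i k n = ∑ j ∈ (Finset.range (n + 1)).filter
      (fun j => j ≤ k ∧ j ≤ i ∧ i + k ≤ n + j),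
      (-1) ^ j * (Nat.choose k j : ℤ) * (Nat.choose (n - k) (i - j)) := by
  rw [K, Finset.sum_filter]
  have h1 : ∀ j ∈ Finset.range (i + 1),
      ((-1 : ℤ)) ^ j * (Nat.choose k j : ℤ) * (Nat.choose (n - k) (i - j)) =
      if j ≤ k ∧ j ≤ i ∧ i + k ≤ n + j then
        ((-1 : ℤ)) ^ j * (Nat.choose k j : ℤ) * (Nat.choose (n - k) (i - j)) else 0 := by
    intro j hj
    simp only [Finset.mem_range] at hj
    split_ifs with h
    · rfl
    · push_neg at h
      rcases Nat.lt_or_ge k j with hkj | hkj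
      · rw [Nat.choose_eq_zero_of_lt hkj]; push_cast; ring
      · have : n - k < i - j := by omega
        rw [Nat.choose_eq_zero_of_lt this]; push_cast; ring
  rw [Finset.sum_congr rfl h1]
  apply Finset.sum_subset
  · apply Finset.range_subset_range.mpr; omega
  · intro j hjn hji
    simp only [Finset.mem_range] at hjn hji
    rw [if_neg]
    omega

theorem stmt2 (i k n : ℕ) (hi : i ≤ n) (hk : k ≤ n) :
    K i k n = (-1) ^ k * K (n - i) k n := by
  rw [K_filter i k n hi hk, K_filter (n - i) k n (Nat.sub_le n i) hk, Finset.mul_sum]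
  apply Finset.sum_nbij' (fun j => k - j) (fun j => k - j)
  · intro j hj
    simp only [Finset.mem_filter, Finset.mem_range] at *
    omega
  · intro j hj
    simp only [Finset.mem_filter, Finset.mem_range] at *
    omega
  · intro j hj
    simp only [Finset.mem_filter, Finset.mem_range] at hj
    omega
  · intro j hj
    simp only [Finset.mem_filter, Finset.mem_range] at hj
    omega
  · intro j hj
    simp only [Finset.mem_filter, Finset.mem_range] at hj
    obtain ⟨-, hjk, hji, hcond⟩ := hj
    have h1 : Nat.choose k (k - j) = Nat.choose k j := Nat.choose_symm hjk
    have h4 : (n - i) - (k - j) = (n - k) - (i - j) := by omega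
    have h5 : Nat.choose (n - k) ((n - k) - (i - j)) = Nat.choose (n - k) (i - j) :=
      Nat.choose_symm (by omega)
    have hsign : ((-1 : ℤ)) ^ k * (-1) ^ (k - j) = (-1) ^ j := by
      have h6 : (-1 : ℤ) ^ (k - j) * (-1) ^ j = (-1) ^ k := by
        rw [← pow_add]; congr 1; omega
      calc ((-1 : ℤ)) ^ k * (-1) ^ (k - j)
          = (-1)^(k-j) * (-1)^j * (-1)^(k-j) := by rw [h6]
        _ = ((-1)^(k-j) * (-1)^(k-j)) * (-1)^j := by ring
        _ = (-1)^j := by rw [← pow_add, ← two_mul, pow_mul]; simp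
    rw [h1, h4, h5, ← hsign]
    ring
end

section
/- Let n be even. Then for every even index i = 2l with 0 ≤ i ≤ n, the absolute value of the middle-column Krawtchouk polynomial satisfies |K_{2l}(n/2, n)| = C(n/2, l). -/
open Finset Polynomial

lemma coeff_one_sub_X_pow (m k : ℕ) :
    ((1 - X : ℤ[X]) ^ m).coeff k = (-1) ^ k * (m.choose k : ℤ) := by
  have h : (1 - X : ℤ[X]) = C (-1) * (X + C (-1)) := by
    simp [C_neg]; ring
  rw [h, mul_pow, ← C_pow, coeff_C_mul, coeff_X_add_C_pow]
  rcases le_or_gt k m with hkm | hkm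
  · have : (-1 : ℤ) ^ m = (-1) ^ (m - k) * (-1) ^ k := by
      rw [← pow_add]; congr 1; omega
    rw [this]; ring_nf
    rw [mul_comm (m - k) 2, pow_mul, neg_one_sq, one_pow, mul_one]
  · rw [Nat.choose_eq_zero_of_lt hkm]; simp

lemma key (m l : ℕ) (hl : l ≤ m) :
    (∑ j ∈ Finset.range (2 * l + 1),
      (-1) ^ j * (m.choose j : ℤ) * (m.choose (2 * l - j) : ℤ)) =
      (-1) ^ l * (m.choose l : ℤ) := by
  have h1 : (∑ j ∈ Finset.range (2 * l + 1),
      (-1) ^ j * (m.choose j : ℤ) * (m.choose (2 * l - j) : ℤ)) =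
      ((1 - X : ℤ[X]) ^ m * (1 + X) ^ m).coeff (2 * l) := by
    rw [coeff_mul, Finset.Nat.sum_antidiagonal_eq_sum_range_succ_mk]
    apply Finset.sum_congr rfl
    intro j _
    rw [coeff_one_sub_X_pow, coeff_one_add_X_pow, mul_assoc]
  have h2 : (1 - X : ℤ[X]) ^ m * (1 + X) ^ m = ((-X ^ 2) + 1) ^ m := by
    rw [← mul_pow]; ring_nf
  rw [h1, h2, add_pow]
  rw [finset_sum_coeff]
  have hc : ∀ k : ℕ, ((-X ^ 2 : ℤ[X]) ^ k * 1 ^ (m - k)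
        * (m.choose k : ℤ[X])).coeff (2 * l)
      = (-1 : ℤ) ^ k * (if 2 * k = 2 * l then 1 else 0) * m.choose k := by
    intro k
    rw [neg_pow, one_pow, mul_one, ← pow_mul, ← C_1, ← C_neg, ← C_pow,
      ← C_eq_natCast, coeff_mul_C, coeff_C_mul, coeff_X_pow]
    rcases eq_or_ne k l with rfl | hk
    · simp
    · rw [if_neg (by omega : ¬ 2 * k = 2 * l), if_neg (by omega : ¬ 2 * l = 2 * k)]
  rw [Finset.sum_eq_single l]
  · rw [hc l]
    simp
  · intro k _ hkl
    rw [hc k]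
    rw [if_neg (by omega)]; ring
  · intro h
    exact absurd (Finset.mem_range.2 (by omega)) h

theorem stmt7 (n l : ℕ) (hn : Even n) (hpos : 0 < n) (hl : 2 * l ≤ n) :
    |K (2 * l) (n / 2) n| = (Nat.choose (n / 2) l : ℤ) := by
  obtain ⟨m, rfl⟩ := hn
  have hm : m + m = 2 * m := by ring
  rw [hm] at hl ⊢
  have h2 : 2 * m / 2 = m := by omega
  have h3 : 2 * m - m = m := by omega
  rw [h2]
  have : K (2 * l) m (2 * m) = (-1) ^ l * (m.choose l : ℤ) := by
    unfold K
    rw [h3]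
    exact key m l (by omega)
  rw [this, abs_mul, abs_pow, abs_neg, abs_one, one_pow, one_mul,
    Int.abs_natCast]
end

section
/- For all n ≥ 1 and 0 ≤ w ≤ n, the binomial distribution probability at its mode satisfies C(n, w) · (w/n)^w · (1 - w/n)^{n-w} ≥ √(2/(nπ)) · c for some universal constant c > 0; in particular C(n, w) · (w/n)^w · (1 - w/n)^{n-w} = Ω(1/√n). (Conventions: 0^0 = 1 handles w = 0 and w = n.) -/
open Finset

open Stirling Real Nat in
private lemma stirling_eq (k : ℕ) :
    (((k+1)! : ℕ) : ℝ) = stirlingSeq (k+1) * (√(2*((k:ℝ)+1)) * (((k:ℝ)+1) / exp 1)^(k+1)) := by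
  rw [stirlingSeq]
  push_cast
  rw [div_mul_cancel₀]
  positivity

open Stirling Real Nat in
private lemma stirling_lb (m : ℕ) (hm : 1 ≤ m) :
    √π * (√(2*(m:ℝ)) * ((m:ℝ) / exp 1)^m) ≤ ((m ! : ℕ) : ℝ) := by
  obtain ⟨k, rfl⟩ : ∃ k, m = k + 1 := ⟨m - 1, by omega⟩
  have h := stirling_eq k
  push_cast at h ⊢
  rw [h]
  have hb : √π ≤ stirlingSeq (k+1) :=
    stirlingSeq'_antitone.le_of_tendsto
      (tendsto_stirlingSeq_sqrt_pi.comp (Filter.tendsto_add_atTop_nat 1)) k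
  exact mul_le_mul_of_nonneg_right hb (by positivity)

open Stirling Real Nat in
private lemma stirling_ub (m : ℕ) (hm : 1 ≤ m) :
    ((m ! : ℕ) : ℝ) ≤ (exp 1 / √2) * (√(2*(m:ℝ)) * ((m:ℝ) / exp 1)^m) := by
  obtain ⟨k, rfl⟩ : ∃ k, m = k + 1 := ⟨m - 1, by omega⟩
  have h := stirling_eq k
  push_cast at h ⊢
  rw [h]
  have hb : stirlingSeq (k+1) ≤ exp 1 / √2 := by
    have := stirlingSeq'_antitone (Nat.zero_le k)
    simpa [stirlingSeq_one] using this
  exact mul_le_mul_of_nonneg_right hb (by positivity)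

private lemma rhs_le_one (n : ℕ) (hn : 1 ≤ n) : Real.sqrt (2 / (n * Real.pi)) * (1/2) ≤ 1 := by
  have hn' : (1:ℝ) ≤ n := by exact_mod_cast hn
  have h1 : (2 / ((n:ℝ) * Real.pi)) ≤ 1 := by
    rw [div_le_one (by positivity)]
    nlinarith [Real.pi_gt_three]
  have := Real.sqrt_le_sqrt h1
  rw [Real.sqrt_one] at this
  nlinarith [Real.sqrt_nonneg (2 / ((n:ℝ) * Real.pi))]

set_option maxHeartbeats 1600000 in
private lemma main_case (n w : ℕ) (hn : 1 ≤ n) (hw : w ≤ n) (hw1 : 0 < w) (hwn : w < n) :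
    (Nat.choose n w : ℝ) * ((w : ℝ) / n) ^ w * (1 - (w : ℝ) / n) ^ (n - w) ≥
      Real.sqrt (2 / (n * Real.pi)) * (1/2) := by
  have hn0 : (0:ℝ) < n := by exact_mod_cast hn
  set e := Real.exp 1 with he
  have he0 : 0 < e := Real.exp_pos 1
  set b := n - w with hb
  have hb1 : 1 ≤ b := by omega
  have hab : w + b = n := by omega
  have hA0 : (0:ℝ) < w := by exact_mod_cast hw1
  have hB0 : (0:ℝ) < b := by exact_mod_cast hb1
  have hN : (n:ℝ) = (w:ℝ) + b := by exact_mod_cast hab.symm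
  have hone : 1 - (w:ℝ)/n = (b:ℝ)/n := by
    field_simp
    linarith [hN]
  rw [hone, Nat.cast_choose ℝ hw, ← hb]
  -- key power identity
  have key : ((n:ℝ)/e)^n * (((w:ℝ)/n)^w * ((b:ℝ)/n)^b) = ((w:ℝ)/e)^w * ((b:ℝ)/e)^b := by
    have he1 : ((n:ℝ)/e)^n = ((n:ℝ)/e)^w * ((n:ℝ)/e)^b := by rw [← pow_add, hab]
    rw [he1]
    have h1 : ((n:ℝ)/e)^w * ((w:ℝ)/n)^w = ((w:ℝ)/e)^w := by
      rw [← mul_pow]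
      congr 1
      field_simp
    have h2 : ((n:ℝ)/e)^b * ((b:ℝ)/n)^b = ((b:ℝ)/e)^b := by
      rw [← mul_pow]
      congr 1
      field_simp
    calc ((n:ℝ)/e)^w * ((n:ℝ)/e)^b * (((w:ℝ)/n)^w * ((b:ℝ)/n)^b)
        = (((n:ℝ)/e)^w * ((w:ℝ)/n)^w) * (((n:ℝ)/e)^b * ((b:ℝ)/n)^b) := by ring
      _ = ((w:ℝ)/e)^w * ((b:ℝ)/e)^b := by rw [h1, h2]
  have hLn := stirling_lb n hn
  have hUa := stirling_ub w hw1
  have hUb := stirling_ub b hb1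
  rw [← he] at hLn hUa hUb
  have hfacpos : (0:ℝ) < (w.factorial : ℝ) * (b.factorial : ℝ) := by positivity
  have step1 : (√Real.pi * (√(2*(n:ℝ)) * ((n:ℝ)/e)^n)) / (((e/√2) * (√(2*(w:ℝ)) * ((w:ℝ)/e)^w)) *
      ((e/√2) * (√(2*(b:ℝ)) * ((b:ℝ)/e)^b))) ≤ (n.factorial : ℝ) /
      ((w.factorial : ℝ) * (b.factorial : ℝ)) := by
    apply div_le_div₀ (by positivity) hLn hfacpos
    exact mul_le_mul hUa hUb (by positivity) (by positivity)
  have hP : (0:ℝ) < ((w:ℝ)/n)^w * ((b:ℝ)/n)^b := by positivity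
  have step2 : (√Real.pi * (√(2*(n:ℝ)) * ((n:ℝ)/e)^n)) / (((e/√2) * (√(2*(w:ℝ)) * ((w:ℝ)/e)^w)) *
        ((e/√2) * (√(2*(b:ℝ)) * ((b:ℝ)/e)^b))) * (((w:ℝ)/n)^w * ((b:ℝ)/n)^b)
      = √Real.pi * √(2*(n:ℝ)) / ((e/√2)^2 * (√(2*(w:ℝ)) * √(2*(b:ℝ)))) := by
    rw [div_mul_eq_mul_div]
    have hnum : √Real.pi * (√(2*(n:ℝ)) * ((n:ℝ)/e)^n) * (((w:ℝ)/n)^w * ((b:ℝ)/n)^b)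
        = (√Real.pi * √(2*(n:ℝ))) * (((w:ℝ)/e)^w * ((b:ℝ)/e)^b) := by
      rw [mul_assoc, mul_assoc, ← key]; ring
    rw [hnum]
    rw [div_eq_div_iff (by positivity) (by positivity)]
    ring
  have hgoal1 : √Real.pi * √(2*(n:ℝ)) / ((e/√2)^2 * (√(2*(w:ℝ)) * √(2*(b:ℝ))))
      ≤ (n.factorial : ℝ) / ((w.factorial : ℝ) * (b.factorial : ℝ)) * ((w:ℝ)/n)^w * ((b:ℝ)/n)^b := by
    calc √Real.pi * √(2*(n:ℝ)) / ((e/√2)^2 * (√(2*(w:ℝ)) * √(2*(b:ℝ))))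
        = (√Real.pi * (√(2*(n:ℝ)) * ((n:ℝ)/e)^n)) / (((e/√2) * (√(2*(w:ℝ)) * ((w:ℝ)/e)^w)) *
            ((e/√2) * (√(2*(b:ℝ)) * ((b:ℝ)/e)^b))) * (((w:ℝ)/n)^w * ((b:ℝ)/n)^b) := step2.symm
      _ ≤ (n.factorial : ℝ) / ((w.factorial : ℝ) * (b.factorial : ℝ)) * (((w:ℝ)/n)^w * ((b:ℝ)/n)^b) :=
          mul_le_mul_of_nonneg_right step1 hP.le
      _ = (n.factorial : ℝ) / ((w.factorial : ℝ) * (b.factorial : ℝ)) * ((w:ℝ)/n)^w * ((b:ℝ)/n)^b := by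
          ring
  refine le_trans ?_ hgoal1
  -- √(2w)√(2b) ≤ n
  have hsab : √(2*(w:ℝ)) * √(2*(b:ℝ)) ≤ (n:ℝ) := by
    rw [← Real.sqrt_mul (by positivity)]
    have h4 : 2*(w:ℝ) * (2*(b:ℝ)) ≤ (n:ℝ)^2 := by nlinarith [sq_nonneg ((w:ℝ) - b)]
    calc √(2*(w:ℝ) * (2*(b:ℝ))) ≤ √((n:ℝ)^2) := Real.sqrt_le_sqrt h4
      _ = (n:ℝ) := Real.sqrt_sq hn0.le
  have hmono : √Real.pi * √(2*(n:ℝ)) / ((e/√2)^2 * (n:ℝ))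
      ≤ √Real.pi * √(2*(n:ℝ)) / ((e/√2)^2 * (√(2*(w:ℝ)) * √(2*(b:ℝ)))) := by
    apply div_le_div_of_nonneg_left (by positivity) (by positivity)
    exact mul_le_mul_of_nonneg_left hsab (by positivity)
  refine le_trans ?_ hmono
  -- final numeric step
  have hesq : (e/√2)^2 = e^2/2 := by
    rw [div_pow, Real.sq_sqrt (by norm_num : (0:ℝ) ≤ 2)]
  rw [hesq]
  have hsqrtn : √(2*(n:ℝ)) = √2 * √(n:ℝ) := Real.sqrt_mul (by norm_num) _
  have hsplit : Real.sqrt (2 / ((n:ℝ) * Real.pi)) = √2 / (√(n:ℝ) * √Real.pi) := by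
    rw [Real.sqrt_div (by norm_num : (0:ℝ) ≤ 2), Real.sqrt_mul hn0.le]
  rw [hsplit, hsqrtn]
  have hs2 : √(n:ℝ) ^ 2 = (n:ℝ) := Real.sq_sqrt hn0.le
  have hp2 : √Real.pi ^ 2 = Real.pi := Real.sq_sqrt Real.pi_pos.le
  have hq2 : √2 ^ 2 = (2:ℝ) := Real.sq_sqrt (by norm_num)
  have hs0 : 0 < √(n:ℝ) := Real.sqrt_pos.mpr hn0
  have hp0 : 0 < √Real.pi := Real.sqrt_pos.mpr Real.pi_pos
  have hq0 : 0 < √2 := Real.sqrt_pos.mpr (by norm_num)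
  have hee : e < 2.72 := lt_trans Real.exp_one_lt_d9 (by norm_num)
  rw [div_mul_eq_mul_div, div_le_div_iff₀ (by positivity) (by positivity)]
  have he2 : e^2 < 7.3984 := by nlinarith
  have h14 : e^2/4 ≤ Real.pi := by nlinarith [Real.pi_gt_three]
  have hRHS : √Real.pi*(√2*√(n:ℝ))*(√(n:ℝ)*√Real.pi) = Real.pi * (√2 * (n:ℝ)) := by
    rw [show √Real.pi*(√2*√(n:ℝ))*(√(n:ℝ)*√Real.pi) = (√Real.pi^2) * √2 * (√(n:ℝ)^2) by ring,
      hp2, hs2]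
    ring
  rw [hRHS]
  nlinarith [mul_le_mul_of_nonneg_right h14 (by positivity : (0:ℝ) ≤ √2 * (n:ℝ))]

theorem stmt18 :
    ∃ c : ℝ, 0 < c ∧ ∀ n w : ℕ, 1 ≤ n → w ≤ n →
      (Nat.choose n w : ℝ) * ((w : ℝ) / n) ^ w * (1 - (w : ℝ) / n) ^ (n - w) ≥
        Real.sqrt (2 / (n * Real.pi)) * c := by
  refine ⟨1/2, by norm_num, fun n w hn hw => ?_⟩
  have hn0 : (0:ℝ) < n := by exact_mod_cast hn
  rcases Nat.eq_zero_or_pos w with rfl | hw1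
  · simpa using rhs_le_one n hn
  rcases eq_or_lt_of_le hw with rfl | hwn
  · have : ((w:ℝ)/w) = 1 := div_self (ne_of_gt hn0)
    simpa [this] using rhs_le_one w hn
  exact main_case n w hn hw hw1 hwn
end
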